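/- (Poisson cgf bound) Let ξ : ℝ → ℝ be differentiable with ξ(0) = 0. If for constants a > 0, v ≥ 0 one has ξ'(θ) ≤ a·ξ(θ) + v·θ for all θ > 0, then ξ(θ) ≤ v·(e^{aθ} − aθ − 1)/a² for all θ ≥ 0. -/

import Mathlib

/-- Poisson cgf bound: if `ξ` is differentiable with `ξ 0 = 0` and satisfies the
differential inequality `ξ'(θ) ≤ a ξ(θ) + v θ` on `θ > 0` (with `a > 0`, `v ≥ 0`),
then `ξ(θ) ≤ v (e^{aθ} − aθ − 1)/a²` for all `θ ≥ 0`. -/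
theorem poisson_cgf_bound (ξ : ℝ → ℝ) (hξ : Differentiable ℝ ξ) (h0 : ξ 0 = 0)
    (a v : ℝ) (ha : 0 < a) (hv : 0 ≤ v)
    (hineq : ∀ θ : ℝ, 0 < θ → deriv ξ θ ≤ a * ξ θ + v * θ) :
    ∀ θ : ℝ, 0 ≤ θ → ξ θ ≤ v * (Real.exp (a * θ) - a * θ - 1) / a ^ 2 := by
  set g : ℝ → ℝ := fun θ => v * (Real.exp (a * θ) - a * θ - 1) / a ^ 2 with hg
  set F : ℝ → ℝ := fun θ => (ξ θ - g θ) * Real.exp (-(a * θ)) with hF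
  have hgd : ∀ θ : ℝ, HasDerivAt g (v * (Real.exp (a * θ) - 1) / a) θ := by
    intro θ
    have h1 : HasDerivAt (fun θ : ℝ => a * θ) a θ := by
      simpa using (hasDerivAt_id θ).const_mul a
    have h2 : HasDerivAt (fun θ : ℝ => Real.exp (a * θ)) (Real.exp (a * θ) * a) θ :=
      (Real.hasDerivAt_exp _).comp θ h1
    have h3 : HasDerivAt (fun θ : ℝ => Real.exp (a * θ) - a * θ - 1)
        (Real.exp (a * θ) * a - a) θ := by
      simpa using (h2.sub h1).sub_const 1
    have h4 := (h3.const_mul v).div_const (a ^ 2)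
    refine h4.congr_deriv ?_
    field_simp
  have hFd : ∀ θ : ℝ,
      HasDerivAt F ((deriv ξ θ - (a * ξ θ + v * θ)) * Real.exp (-(a * θ))) θ := by
    intro θ
    have h1 : HasDerivAt (fun θ : ℝ => -(a * θ)) (-a) θ := by
      simpa using ((hasDerivAt_id θ).const_mul a).fun_neg
    have h2 : HasDerivAt (fun θ : ℝ => Real.exp (-(a * θ)))
        (Real.exp (-(a * θ)) * (-a)) θ := (Real.hasDerivAt_exp _).comp θ h1
    have h3 : HasDerivAt (fun θ => ξ θ - g θ) (deriv ξ θ - v * (Real.exp (a * θ) - 1) / a) θ :=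
      (hξ θ).hasDerivAt.sub (hgd θ)
    have h4 := h3.mul h2
    refine h4.congr_deriv ?_
    have ha' : (a : ℝ) ≠ 0 := ne_of_gt ha
    simp only [hg]
    field_simp
    ring
  have hF0 : F 0 = 0 := by simp [hF, hg, h0]
  intro θ hθ
  have hanti : AntitoneOn F (Set.Ici (0 : ℝ)) := by
    apply antitoneOn_of_deriv_nonpos (convex_Ici 0)
    · exact Continuous.continuousOn (continuous_iff_continuousAt.2 fun x =>
        (hFd x).continuousAt)
    · intro x _
      exact (hFd x).differentiableAt.differentiableWithinAt
    · intro x hx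
      rw [interior_Ici] at hx
      rw [(hFd x).deriv]
      have := hineq x hx
      have hexp : 0 < Real.exp (-(a * x)) := Real.exp_pos _
      nlinarith
  have hFθ : F θ ≤ 0 := hF0 ▸ hanti (Set.self_mem_Ici) hθ hθ
  have hexp : 0 < Real.exp (-(a * θ)) := Real.exp_pos _
  have hFθ' : (ξ θ - g θ) * Real.exp (-(a * θ)) ≤ 0 := hFθ
  have : ξ θ - g θ ≤ 0 := by
    by_contra h
    push_neg at h
    nlinarith [mul_pos h hexp]
  have hgθ : g θ = v * (Real.exp (a * θ) - a * θ - 1) / a ^ 2 := rfl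
  linarith
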